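/- Let f(z) = z + a₂ z² ∈ Ω (so |a₂| ≤ 1/2). Then the second partial sum s₂(z) = z + a₂ z² satisfies Re(1 + z s₂''(z)/s₂'(z)) > 0 for all |z| < 1/2; that is, s₂ is convex in the disk of radius 1/2. -/

import Mathlib

open Metric Complex

theorem stmt_7 (a₂ : ℂ) (ha₂ : ‖a₂‖ ≤ 1/2) :
    ∀ z : ℂ, ‖z‖ < 1/2 →
      0 < (1 + z * deriv (deriv (fun w : ℂ => w + a₂ * w ^ 2)) z /
            deriv (fun w : ℂ => w + a₂ * w ^ 2) z).re := by
  intro z hz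
  have hd : ∀ w : ℂ, HasDerivAt (fun w : ℂ => w + a₂ * w ^ 2) (1 + a₂ * (2 * w)) w := by
    intro w
    have h1 := (hasDerivAt_pow 2 w).const_mul a₂
    simpa using (hasDerivAt_id w).fun_add h1
  have hderiv : deriv (fun w : ℂ => w + a₂ * w ^ 2) = fun w => 1 + a₂ * (2 * w) :=
    funext fun w => (hd w).deriv
  have hd2 : ∀ w : ℂ, HasDerivAt (fun w : ℂ => 1 + a₂ * (2 * w)) (2 * a₂) w := by
    intro w
    have h1 := ((hasDerivAt_id w).const_mul (2 : ℂ)).const_mul a₂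
    have h2 := h1.const_add (1 : ℂ)
    simpa [mul_comm, mul_assoc] using h2
  have hderiv2 : deriv (deriv (fun w : ℂ => w + a₂ * w ^ 2)) z = 2 * a₂ := by
    rw [hderiv]; exact (hd2 z).deriv
  rw [hderiv2, hderiv]
  set u : ℂ := 2 * a₂ * z with hu
  have hzu : z * (2 * a₂) = u := by rw [hu]; ring
  have hdenom : 1 + a₂ * (2 * z) = 1 + u := by rw [hu]; ring
  rw [hzu]; beta_reduce; rw [hdenom]
  have hun : ‖u‖ < 1/2 := by
    have : ‖u‖ = 2 * ‖a₂‖ * ‖z‖ := by simp [hu, norm_mul]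
    rw [this]
    calc 2 * ‖a₂‖ * ‖z‖ ≤ 2 * (1/2) * ‖z‖ := by
          apply mul_le_mul_of_nonneg_right _ (norm_nonneg z)
          nlinarith [norm_nonneg a₂]
      _ = ‖z‖ := by ring
      _ < 1/2 := hz
  have h1u : (1/2 : ℝ) < ‖(1 : ℂ) + u‖ := by
    have h := norm_sub_norm_le (1 : ℂ) (-u)
    rw [sub_neg_eq_add] at h
    simp only [norm_one, norm_neg] at h
    linarith
  have hne : (1 : ℂ) + u ≠ 0 := by
    intro h
    rw [h] at h1u
    simp at h1u
    linarith
  have hratio : ‖u / (1 + u)‖ < 1 := by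
    rw [norm_div]
    rw [div_lt_one (by linarith : (0:ℝ) < ‖(1:ℂ)+u‖)]
    linarith
  have hre : -1 < (u / (1 + u)).re := by
    have h1 : |(u / (1 + u)).re| ≤ ‖u / (1 + u)‖ := Complex.abs_re_le_norm _
    have h2 : -(u / (1 + u)).re ≤ |(u / (1 + u)).re| := neg_le_abs _
    linarith
  have : (1 + u / (1 + u)).re = 1 + (u / (1 + u)).re := by simp
  rw [this]
  linarith
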